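/- Let G be a group, Δ a G-set, and A ↪ B ↠ C a short exact sequence of G-modules. Then the sequence splits as a sequence of G_δ-modules for every δ ∈ Δ if and only if the sequence A ⊗ ℤΔ ↪ B ⊗ ℤΔ ↠ C ⊗ ℤΔ (with diagonal G-action) splits as a sequence of G-modules. -/

import Mathlib

open TensorProduct

/-- The permutation representation on `H →₀ k`, as `Representation.ofMulAction` was defined
in the older Mathlib (before `MonoidAlgebra` became a structure distinct from `Finsupp`). -/
noncomputable def ofMulActionFinsupp (k G H : Type*) [CommSemiring k] [Monoid G] [MulAction G H] :
    Representation k G (H →₀ k) where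
  toFun g := Finsupp.lmapDomain k k (g • ·)
  map_one' := by ext x y; simp
  map_mul' x y := by ext z w; simp [mul_smul]

theorem ofMulActionFinsupp_single' {k G H : Type*} [CommSemiring k] [Monoid G] [MulAction G H]
    (g : G) (x : H) (r : k) :
    ofMulActionFinsupp k G H g (Finsupp.single x r) = Finsupp.single (g • x) r := by
  show Finsupp.lmapDomain k k (g • ·) (Finsupp.single x r) = _
  simp

theorem ofMulActionFinsupp_apply' {k G H : Type*} [CommSemiring k] [Group G] [MulAction G H]
    (g : G) (f : H →₀ k) (x : H) :
    ofMulActionFinsupp k G H g f x = f (g⁻¹ • x) := by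
  show Finsupp.lmapDomain k k (g • ·) f x = _
  rw [Finsupp.lmapDomain_apply]
  conv_lhs => rw [← smul_inv_smul g x]
  exact Finsupp.mapDomain_apply (MulAction.injective g) f _

/-- Any additive homomorphism between `ℤ`-modules is `ℤ`-linear, for arbitrary
(not necessarily canonical) `ℤ`-module structures. -/
private def intLinear {M N : Type} [AddCommGroup M] [AddCommGroup N]
    [Module ℤ M] [Module ℤ N] (f : M →+ N) : M →ₗ[ℤ] N :=
  { toFun := f, map_add' := f.map_add,
    map_smul' := fun n x => by simpa using map_intCast_smul f ℤ ℤ n x }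

/-- A short exact sequence `A ↪ B ↠ C` of `G`-modules splits over the stabilizer `G_δ`
for every `δ ∈ Δ` if and only if the tensored sequence
`A ⊗ ℤΔ ↪ B ⊗ ℤΔ ↠ C ⊗ ℤΔ` (diagonal `G`-action) splits `G`-equivariantly. -/
theorem stmt10 (G : Type) [Group G] (Δ : Type) [MulAction G Δ]
    (A B C : Type) [AddCommGroup A] [AddCommGroup B] [AddCommGroup C]
    [Module ℤ A] [Module ℤ B] [Module ℤ C]
    (ρA : Representation ℤ G A) (ρB : Representation ℤ G B) (ρC : Representation ℤ G C)
    (ι : A →ₗ[ℤ] B) (π : B →ₗ[ℤ] C)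
    (hι : Function.Injective ι) (hπ : Function.Surjective π)
    (hexact : Function.Exact ι π)
    (hιe : ∀ g : G, ι ∘ₗ ρA g = ρB g ∘ₗ ι)
    (hπe : ∀ g : G, π ∘ₗ ρB g = ρC g ∘ₗ π) :
    (∀ δ : Δ, ∃ s : C →ₗ[ℤ] B, π ∘ₗ s = LinearMap.id ∧
        ∀ g ∈ MulAction.stabilizer G δ, s ∘ₗ ρC g = ρB g ∘ₗ s) ↔
    (∃ S : @LinearMap ℤ ℤ _ _ (RingHom.id ℤ) (C ⊗[ℤ] (Δ →₀ ℤ)) (B ⊗[ℤ] (Δ →₀ ℤ)) _ _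
          TensorProduct.instModule TensorProduct.instModule,
        (LinearMap.rTensor (Δ →₀ ℤ) π) ∘ₗ S = @LinearMap.id ℤ (C ⊗[ℤ] (Δ →₀ ℤ)) _ _ TensorProduct.instModule ∧
        ∀ g : G, S ∘ₗ (ρC.tprod (ofMulActionFinsupp ℤ G Δ)) g
          = (ρB.tprod (ofMulActionFinsupp ℤ G Δ)) g ∘ₗ S) := by
  classical
  have hCc : ∀ (g₁ g₂ : G) (c : C), ρC g₁ (ρC g₂ c) = ρC (g₁ * g₂) c := by
    intro g₁ g₂ c; rw [map_mul]; rfl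
  have hBc : ∀ (g₁ g₂ : G) (b : B), ρB g₁ (ρB g₂ b) = ρB (g₁ * g₂) b := by
    intro g₁ g₂ b; rw [map_mul]; rfl
  constructor
  · intro h
    choose s hs1 hs2 using h
    let rep : Δ → Δ := fun δ => (Quotient.mk'' δ : MulAction.orbitRel.Quotient G Δ).out
    have hrepeq : ∀ (g : G) (δ : Δ), rep (g • δ) = rep δ := by
      intro g δ
      have h1 : (Quotient.mk'' (g • δ) : MulAction.orbitRel.Quotient G Δ) = Quotient.mk'' δ :=
        Quotient.sound' (by rw [MulAction.orbitRel_apply]; exact MulAction.mem_orbit δ g)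
      simp only [rep, h1]
    have hex : ∀ δ : Δ, ∃ g : G, g • rep δ = δ := by
      intro δ
      have h1 : (Quotient.mk'' (rep δ) : MulAction.orbitRel.Quotient G Δ) = Quotient.mk'' δ :=
        Quotient.out_eq' _
      have h2 := Quotient.exact' h1
      rw [MulAction.orbitRel_apply] at h2
      obtain ⟨g, hg⟩ := h2
      exact ⟨g⁻¹, by rw [← hg, inv_smul_smul]⟩
    choose γ hγ using hex
    let sd : Δ → C →ₗ[ℤ] B := fun δ => ρB (γ δ) ∘ₗ s (rep δ) ∘ₗ ρC (γ δ)⁻¹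
    have hsd1 : ∀ (δ : Δ) (c : C), π (sd δ c) = c := by
      intro δ c
      have h1 : π (ρB (γ δ) (s (rep δ) (ρC (γ δ)⁻¹ c)))
          = ρC (γ δ) (π (s (rep δ) (ρC (γ δ)⁻¹ c))) := LinearMap.congr_fun (hπe (γ δ)) _
      have h2 : π (s (rep δ) (ρC (γ δ)⁻¹ c)) = ρC (γ δ)⁻¹ c :=
        LinearMap.congr_fun (hs1 (rep δ)) _
      simp only [sd, LinearMap.coe_comp, Function.comp_apply, h1, h2, hCc,
        mul_inv_cancel, map_one, Module.End.one_apply]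
    have hsd2 : ∀ (g : G) (δ : Δ) (c : C), sd (g • δ) (ρC g c) = ρB g (sd δ c) := by
      intro g δ c
      have hδ' : rep (g • δ) = rep δ := hrepeq g δ
      have h3 : (γ (g • δ))⁻¹ • (g • δ) = rep δ := by
        rw [← hδ']; exact (eq_inv_smul_iff.mpr (hγ (g • δ))).symm
      have hmem : (γ (g • δ))⁻¹ * g * γ δ ∈ MulAction.stabilizer G (rep δ) := by
        rw [MulAction.mem_stabilizer_iff, mul_smul, mul_smul, hγ δ]
        exact h3
      have e1 : s (rep δ) (ρC ((γ (g • δ))⁻¹ * g * γ δ) (ρC (γ δ)⁻¹ c))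
          = ρB ((γ (g • δ))⁻¹ * g * γ δ) (s (rep δ) (ρC (γ δ)⁻¹ c)) :=
        LinearMap.congr_fun (hs2 (rep δ) _ hmem) _
      have e2 : ρC ((γ (g • δ))⁻¹ * g * γ δ) (ρC (γ δ)⁻¹ c) = ρC ((γ (g • δ))⁻¹) (ρC g c) := by
        rw [hCc, hCc, mul_inv_cancel_right]
      calc sd (g • δ) (ρC g c)
          = ρB (γ (g • δ)) (s (rep δ) (ρC ((γ (g • δ))⁻¹) (ρC g c))) := by
            simp only [sd, LinearMap.coe_comp, Function.comp_apply, hδ']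
        _ = ρB (γ (g • δ)) (ρB ((γ (g • δ))⁻¹ * g * γ δ) (s (rep δ) (ρC (γ δ)⁻¹ c))) := by
            rw [← e2, e1]
        _ = ρB (g * γ δ) (s (rep δ) (ρC (γ δ)⁻¹ c)) := by
            rw [hBc]
            congr 1
            group
        _ = ρB g (sd δ c) := by
            simp only [sd, LinearMap.coe_comp, Function.comp_apply, ← hBc]
    -- the coherent section on the tensor product
    let T : Δ → C →ₗ[ℤ] B ⊗[ℤ] (Δ →₀ ℤ) := fun δ =>
      intLinear (AddMonoidHom.mk' (fun c => sd δ c ⊗ₜ[ℤ] Finsupp.single δ (1 : ℤ))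
        (fun x y => by simp [TensorProduct.add_tmul]))
    have hT : ∀ (δ : Δ) (c : C), T δ c = sd δ c ⊗ₜ[ℤ] Finsupp.single δ 1 := fun _ _ => rfl
    let F : (Δ →₀ ℤ) →ₗ[ℤ] C →ₗ[ℤ] B ⊗[ℤ] (Δ →₀ ℤ) :=
      Finsupp.lsum ℤ (fun δ => LinearMap.toSpanSingleton ℤ _ (T δ))
    let S : C ⊗[ℤ] (Δ →₀ ℤ) →ₗ[ℤ] B ⊗[ℤ] (Δ →₀ ℤ) := TensorProduct.lift F.flip
    have hS1 : ∀ (c : C) (δ : Δ),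
        S (c ⊗ₜ[ℤ] Finsupp.single δ 1) = sd δ c ⊗ₜ[ℤ] Finsupp.single δ 1 := by
      intro c δ
      have : S (c ⊗ₜ[ℤ] Finsupp.single δ 1) = ((1 : ℤ) • T δ) c := by
        simp only [S, LinearMap.restrictScalars_apply, LinearMap.coe_restrictScalars,
          TensorProduct.lift.tmul, LinearMap.flip_apply, F, Finsupp.lsum_single,
          LinearMap.toSpanSingleton_apply]
      rw [this, one_smul, hT]
    have hS : ∀ (c : C) (δ : Δ) (r : ℤ),
        S (c ⊗ₜ[ℤ] Finsupp.single δ r) = sd δ c ⊗ₜ[ℤ] Finsupp.single δ r := by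
      intro c δ r
      induction r using Int.induction_on with
      | zero => simp
      | succ n ih =>
          have hsplit : Finsupp.single δ ((n : ℤ) + 1)
              = Finsupp.single δ (n : ℤ) + Finsupp.single δ 1 := by
            rw [← Finsupp.single_add]
          rw [hsplit, TensorProduct.tmul_add, map_add, ih, hS1, ← TensorProduct.tmul_add,
            ← hsplit]
      | pred n ih =>
          have hsplit : Finsupp.single δ (-(n : ℤ) - 1)
              = Finsupp.single δ (-(n : ℤ)) - Finsupp.single δ 1 := by
            rw [← Finsupp.single_sub]
          rw [hsplit, TensorProduct.tmul_sub, map_sub, ih, hS1, ← TensorProduct.tmul_sub,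
            ← hsplit]
    let S' : @LinearMap ℤ ℤ _ _ (RingHom.id ℤ) (C ⊗[ℤ] (Δ →₀ ℤ)) (B ⊗[ℤ] (Δ →₀ ℤ)) _ _
        TensorProduct.instModule TensorProduct.instModule :=
      @intLinear _ _ _ _ TensorProduct.instModule TensorProduct.instModule S.toAddMonoidHom
    have hS'eq : ∀ x, S' x = S x := fun _ => rfl
    refine ⟨S', ?_, ?_⟩
    · refine DFunLike.ext _ _ fun x => ?_
      induction x using TensorProduct.induction_on with
      | zero => simp
      | add x y hx hy =>
          simp only [map_add, LinearMap.comp_apply, LinearMap.id_apply] at hx hy ⊢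
          rw [hx, hy]
      | tmul c f =>
          induction f using Finsupp.induction_linear with
          | zero => simp
          | add f₁ f₂ h₁ h₂ =>
              simp only [TensorProduct.tmul_add, map_add, LinearMap.comp_apply,
                LinearMap.id_apply] at h₁ h₂ ⊢
              rw [h₁, h₂]
          | single δ r =>
              simp only [LinearMap.comp_apply, LinearMap.coe_restrictScalars, hS'eq, hS,
                LinearMap.rTensor_tmul, hsd1, LinearMap.id_apply]
    · intro g
      refine DFunLike.ext _ _ fun x => ?_
      induction x using TensorProduct.induction_on with
      | zero => simp
      | add x y hx hy =>
          simp only [map_add, LinearMap.comp_apply] at hx hy ⊢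
          rw [hx, hy]
      | tmul c f =>
          induction f using Finsupp.induction_linear with
          | zero => simp
          | add f₁ f₂ h₁ h₂ =>
              simp only [TensorProduct.tmul_add, map_add, LinearMap.comp_apply] at h₁ h₂ ⊢
              rw [h₁, h₂]
          | single δ r =>
              simp only [LinearMap.comp_apply, LinearMap.coe_restrictScalars, hS'eq,
                Representation.tprod_apply, TensorProduct.map_tmul,
                ofMulActionFinsupp_single', hS, hsd2]
  · rintro ⟨S, hS1, hS2⟩ δ
    let EB : B ⊗[ℤ] (Δ →₀ ℤ) →ₗ[ℤ] B := intLinear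
      (AddMonoidHom.mk'
        (fun x => (TensorProduct.rid ℤ B) ((LinearMap.lTensor B (Finsupp.lapply δ)) x))
        (fun x y => by simp [map_add]))
    let EC : C ⊗[ℤ] (Δ →₀ ℤ) →ₗ[ℤ] C := intLinear
      (AddMonoidHom.mk'
        (fun x => (TensorProduct.rid ℤ C) ((LinearMap.lTensor C (Finsupp.lapply δ)) x))
        (fun x y => by simp [map_add]))
    have hEB : ∀ (b : B) (f : Δ →₀ ℤ), EB (b ⊗ₜ[ℤ] f) = f δ • b := by
      intro b f
      have h0 : EB (b ⊗ₜ[ℤ] f)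
          = (TensorProduct.rid ℤ B) ((LinearMap.lTensor B (Finsupp.lapply δ)) (b ⊗ₜ[ℤ] f)) :=
        rfl
      rw [h0, LinearMap.lTensor_tmul, TensorProduct.rid_tmul, Finsupp.lapply_apply]
      simpa using Int.cast_smul_eq_zsmul ℤ (f δ) b
    have hEC : ∀ (c : C) (f : Δ →₀ ℤ), EC (c ⊗ₜ[ℤ] f) = f δ • c := by
      intro c f
      have h0 : EC (c ⊗ₜ[ℤ] f)
          = (TensorProduct.rid ℤ C) ((LinearMap.lTensor C (Finsupp.lapply δ)) (c ⊗ₜ[ℤ] f)) :=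
        rfl
      rw [h0, LinearMap.lTensor_tmul, TensorProduct.rid_tmul, Finsupp.lapply_apply]
      simpa using Int.cast_smul_eq_zsmul ℤ (f δ) c
    let j : C →ₗ[ℤ] C ⊗[ℤ] (Δ →₀ ℤ) :=
      intLinear (AddMonoidHom.mk' (fun c => c ⊗ₜ[ℤ] Finsupp.single δ (1 : ℤ))
        (fun x y => by simp [TensorProduct.add_tmul]))
    have hj : ∀ c : C, j c = c ⊗ₜ[ℤ] Finsupp.single δ 1 := fun c => rfl
    have hcommE : ∀ x : B ⊗[ℤ] (Δ →₀ ℤ),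
        π (EB x) = EC ((LinearMap.rTensor (Δ →₀ ℤ) π) x) := by
      intro x
      induction x using TensorProduct.induction_on with
      | zero => simp
      | add x y hx hy => simp only [map_add, hx, hy]
      | tmul b f => simp [hEB, hEC, LinearMap.rTensor_tmul, map_zsmul]
    refine ⟨EB ∘ₗ S ∘ₗ j, ?_, ?_⟩
    · ext c
      have h1 : (LinearMap.rTensor (Δ →₀ ℤ) π) (S (c ⊗ₜ[ℤ] Finsupp.single δ 1))
          = c ⊗ₜ[ℤ] Finsupp.single δ 1 := by
        have := DFunLike.congr_fun hS1 (j c)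
        simpa [hj] using this
      simp only [LinearMap.comp_apply, LinearMap.coe_restrictScalars, LinearMap.id_apply, hj, hcommE, h1, hEC,
        Finsupp.single_eq_same, one_zsmul]
    · intro g hg
      have hgδ : g • δ = δ := MulAction.mem_stabilizer_iff.mp hg
      have hgδ' : g⁻¹ • δ = δ := inv_smul_eq_iff.mpr hgδ.symm
      have e2 : ∀ x : B ⊗[ℤ] (Δ →₀ ℤ),
          EB ((ρB.tprod (ofMulActionFinsupp ℤ G Δ)) g x) = ρB g (EB x) := by
        intro x
        induction x using TensorProduct.induction_on with
        | zero => simp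
        | add x y hx hy => simp only [map_add, hx, hy]
        | tmul b f =>
            simp only [Representation.tprod_apply, TensorProduct.map_tmul, hEB,
              ofMulActionFinsupp_apply', hgδ', map_zsmul]
      ext c
      have e0 : j (ρC g c) = (ρC.tprod (ofMulActionFinsupp ℤ G Δ)) g (j c) := by
        simp [hj, Representation.tprod_apply, TensorProduct.map_tmul,
          ofMulActionFinsupp_single', hgδ]
      have e1 : S (j (ρC g c)) = (ρB.tprod (ofMulActionFinsupp ℤ G Δ)) g (S (j c)) := by
        rw [e0]; exact DFunLike.congr_fun (hS2 g) (j c)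
      simp only [LinearMap.comp_apply, LinearMap.coe_restrictScalars, e1, e2]
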